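/- arXiv:2306.06532 — 2 statements merged into one kernel-verified Lean document; each statement's English description precedes it below -/
import Mathlib

section
/- Let M N : ℕ be positive, A : Matrix (Fin M) (Fin M) ℂ and B : Matrix (Fin N) (Fin N) ℂ. Then the spectrum of the Kronecker sum is the sumset of the spectra: spectrum ℂ (A ⊞ B) = {z : ℂ | ∃ α ∈ spectrum ℂ A, ∃ β ∈ spectrum ℂ B, z = α + β}. -/
open Matrix Polynomial

/-- The Kronecker sum `A ⊞ B = A ⊗ I_N + I_M ⊗ B` of two square complex matrices. -/
def kronSum {M N : ℕ} (A : Matrix (Fin M) (Fin M) ℂ) (B : Matrix (Fin N) (Fin N) ℂ) :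
    Matrix (Fin M × Fin N) (Fin M × Fin N) ℂ :=
  fun p q => (if p.2 = q.2 then A p.1 q.1 else 0) + (if p.1 = q.1 then B p.2 q.2 else 0)

variable {n : Type*} [Fintype n] [DecidableEq n]

lemma mem_spec_iff_det (Mtx : Matrix n n ℂ) (z : ℂ) :
    z ∈ spectrum ℂ Mtx ↔ (z • (1 : Matrix n n ℂ) - Mtx).det = 0 := by
  rw [spectrum.mem_iff, Matrix.isUnit_iff_isUnit_det, isUnit_iff_ne_zero, not_ne_iff,
    Algebra.algebraMap_eq_smul_one]

lemma eval_charpoly'' (Mtx : Matrix n n ℂ) (z : ℂ) :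
    Mtx.charpoly.eval z = (z • (1 : Matrix n n ℂ) - Mtx).det := by
  rw [Matrix.charpoly, eval_det, matPolyEquiv_charmatrix]
  simp [Matrix.scalar, smul_one_eq_diagonal, algebraMap_eq_diagonal]
  rfl

lemma mem_spec_iff_eigvec (Mtx : Matrix n n ℂ) (z : ℂ) :
    z ∈ spectrum ℂ Mtx ↔ ∃ v ≠ 0, Mtx.mulVec v = z • v := by
  rw [mem_spec_iff_det, ← Matrix.exists_mulVec_eq_zero_iff]
  constructor
  · rintro ⟨v, hv, h⟩
    refine ⟨v, hv, ?_⟩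
    rw [sub_mulVec, smul_mulVec, one_mulVec, sub_eq_zero] at h
    exact h.symm
  · rintro ⟨v, hv, h⟩
    exact ⟨v, hv, by rw [sub_mulVec, smul_mulVec, one_mulVec, h, sub_self]⟩

lemma kronSum_mulVec {M N : ℕ} (A : Matrix (Fin M) (Fin M) ℂ) (B : Matrix (Fin N) (Fin N) ℂ)
    (u : Fin M × Fin N → ℂ) (l : Fin M) (i : Fin N) :
    (kronSum A B).mulVec u (l, i) =
      (∑ k, A l k * u (k, i)) + ∑ j, B i j * u (l, j) := by
  simp only [Matrix.mulVec, dotProduct, kronSum, Fintype.sum_prod_type, add_mul,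
    Finset.sum_add_distrib, ite_mul, zero_mul]
  congr 1
  · refine Finset.sum_congr rfl fun k _ => ?_
    simp [eq_comm]
  · rw [Finset.sum_comm]
    simp [eq_comm]

theorem spectrum_kronSum
    (M N : ℕ) (hM : 0 < M) (hN : 0 < N)
    (A : Matrix (Fin M) (Fin M) ℂ) (B : Matrix (Fin N) (Fin N) ℂ) :
    spectrum ℂ (kronSum A B) =
      {z : ℂ | ∃ α ∈ spectrum ℂ A, ∃ β ∈ spectrum ℂ B, z = α + β} := by
  ext z
  simp only [Set.mem_setOf_eq]
  constructor
  · intro hz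
    obtain ⟨u, hu, hKu⟩ := (mem_spec_iff_eigvec _ z).mp hz
    set X : Matrix (Fin M) (Fin N) ℂ := Matrix.of fun l i => u (l, i) with hX
    have hXne : X ≠ 0 := by
      intro h
      apply hu
      funext p
      have := congrFun (congrFun h p.1) p.2
      simpa [hX] using this
    have hsyl : A * X + X * Bᵀ = z • X := by
      ext l i
      have h1 := congrFun hKu (l, i)
      rw [kronSum_mulVec] at h1
      simp only [Matrix.add_apply, Matrix.mul_apply, Matrix.smul_apply, smul_eq_mul, hX,
        Matrix.transpose_apply, Pi.smul_apply, Matrix.of_apply] at *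
      rw [← h1]
      congr 1
      exact Finset.sum_congr rfl fun j _ => mul_comm _ _
    set Cm : Matrix (Fin N) (Fin N) ℂ := z • 1 - Bᵀ with hCm
    have hAXC : A * X = X * Cm := by
      rw [hCm, Matrix.mul_sub, Matrix.mul_smul, Matrix.mul_one, eq_sub_iff_add_eq, hsyl]
    have hpow : ∀ n : ℕ, A ^ n * X = X * Cm ^ n := by
      intro n
      induction n with
      | zero => simp
      | succ n ih => rw [pow_succ, pow_succ, Matrix.mul_assoc, hAXC,
          ← Matrix.mul_assoc, ih, Matrix.mul_assoc]
    have haeval : ∀ p : ℂ[X], (aeval A p) * X = X * (aeval Cm p) := by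
      intro p
      rw [aeval_eq_sum_range, aeval_eq_sum_range' (lt_add_one p.natDegree),
        Matrix.sum_mul, Matrix.mul_sum]
      exact Finset.sum_congr rfl fun n _ => by
        rw [Matrix.smul_mul, Matrix.mul_smul, hpow]
    have hzero : X * (aeval Cm A.charpoly) = 0 := by
      rw [← haeval, Matrix.aeval_self_charpoly, Matrix.zero_mul]
    have hnotunit : ¬ IsUnit (aeval Cm A.charpoly) := by
      intro h
      apply hXne
      have h2 : X * ((aeval Cm A.charpoly) * (↑h.unit⁻¹ : Matrix (Fin N) (Fin N) ℂ)) = X := by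
        rw [h.mul_val_inv, Matrix.mul_one]
      rw [← h2, ← Matrix.mul_assoc, hzero, Matrix.zero_mul]
    have h0spec : (0 : ℂ) ∈ spectrum ℂ (aeval Cm A.charpoly) :=
      spectrum.zero_mem (R := ℂ) hnotunit
    have hdeg : 0 < A.charpoly.degree := by
      rw [← Polynomial.natDegree_pos_iff_degree_pos, Matrix.charpoly_natDegree_eq_dim]
      simpa using hM
    rw [spectrum.map_polynomial_aeval_of_degree_pos Cm A.charpoly hdeg] at h0spec
    obtain ⟨μ, hμ, hev⟩ := h0spec
    refine ⟨μ, ?_, z - μ, ?_, by ring⟩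
    · rw [mem_spec_iff_det, ← eval_charpoly'']
      exact hev
    · rw [mem_spec_iff_det] at hμ ⊢
      have hneg : μ • (1 : Matrix (Fin N) (Fin N) ℂ) - Cm = -((z - μ) • 1 - Bᵀ) := by
        rw [hCm]; module
      rw [hneg, Matrix.det_neg] at hμ
      have h2 : ((z - μ) • (1 : Matrix (Fin N) (Fin N) ℂ) - Bᵀ).det = 0 := by
        rcases mul_eq_zero.mp hμ with h | h
        · exact absurd h (by simp)
        · exact h
      rwa [show (z - μ) • (1 : Matrix (Fin N) (Fin N) ℂ) - Bᵀ = ((z - μ) • 1 - B)ᵀ by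
        simp [Matrix.transpose_sub, Matrix.transpose_smul], Matrix.det_transpose] at h2
  · rintro ⟨α, hα, β, hβ, rfl⟩
    obtain ⟨v, hv, hv'⟩ := (mem_spec_iff_eigvec A α).mp hα
    obtain ⟨w, hw, hw'⟩ := (mem_spec_iff_eigvec B β).mp hβ
    rw [mem_spec_iff_eigvec]
    refine ⟨fun p => v p.1 * w p.2, ?_, ?_⟩
    · obtain ⟨l, hl⟩ := Function.ne_iff.mp hv
      obtain ⟨i, hi⟩ := Function.ne_iff.mp hw
      exact Function.ne_iff.mpr ⟨(l, i), mul_ne_zero hl hi⟩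
    · funext ⟨l, i⟩
      have h1 := congrFun hv' l
      have h2 := congrFun hw' i
      simp only [Matrix.mulVec, dotProduct, Pi.smul_apply, smul_eq_mul] at h1 h2
      rw [kronSum_mulVec]
      simp only [Pi.smul_apply, smul_eq_mul]
      calc (∑ k, A l k * (v k * w i)) + ∑ j, B i j * (v l * w j)
          = (∑ k, A l k * v k) * w i + v l * ∑ j, B i j * w j := by
            rw [Finset.sum_mul, Finset.mul_sum]; congr 1 <;>
              exact Finset.sum_congr rfl fun _ _ => by ring
        _ = (α + β) * (v l * w i) := by rw [h1, h2]; ring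
end

section
/- Let M N : ℕ be positive, A : Matrix (Fin M) (Fin M) ℂ and B : Matrix (Fin N) (Fin N) ℂ be Hermitian matrices (hA : A.IsHermitian, hB : B.IsHermitian). Then A ⊞ B is Hermitian, and the multiset of its eigenvalues (with multiplicity) equals the multiset of all pairwise sums of eigenvalues of A and B: Finset.univ.val.map (hAB.eigenvalues) = Finset.univ.val.map (fun p : Fin M × Fin N => hA.eigenvalues p.1 + hB.eigenvalues p.2), where hAB is the proof that A ⊞ B is Hermitian. -/
open Polynomial Matrix Kronecker

section helpers

variable {n : Type*} [Fintype n] [DecidableEq n] {R : Type*} [CommRing R]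

lemma my_charpoly_diagonal (d : n → R) :
    (Matrix.diagonal d).charpoly = ∏ i, (X - C (d i)) := by
  rw [Matrix.charpoly]
  have h : (Matrix.diagonal d).charmatrix = Matrix.diagonal (fun i => X - C (d i)) := by
    ext i j
    by_cases h : i = j <;>
      simp [h, Matrix.charmatrix_apply, Matrix.diagonal_apply]
  rw [h, Matrix.det_diagonal]

lemma my_charpoly_conj (P A Q : Matrix n n R) (h1 : P * Q = 1) :
    (P * A * Q).charpoly = A.charpoly := by
  have hmapPQ : P.map C * Q.map C = 1 := by
    rw [← Matrix.map_mul, h1, Matrix.map_one _ (map_zero C) (map_one C)]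
  have key : (P * A * Q).charmatrix = P.map C * A.charmatrix * Q.map C := by
    unfold charmatrix
    rw [Matrix.mul_sub, Matrix.sub_mul]
    congr 1
    · have : P.map C * Matrix.scalar n (X : R[X]) = Matrix.scalar n (X : R[X]) * P.map C :=
        ((Matrix.scalar_commute (X : R[X]) (fun r' => Commute.all _ _) (P.map C))).symm
      rw [this, Matrix.mul_assoc, hmapPQ, Matrix.mul_one]
    · simp only [RingHom.mapMatrix_apply, Matrix.map_mul]
  rw [Matrix.charpoly, key, Matrix.det_mul, Matrix.det_mul, Matrix.charpoly]
  have hd : (P.map C).det * (Q.map C).det = 1 := by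
    rw [← Matrix.det_mul, hmapPQ, Matrix.det_one]
  calc (P.map C).det * A.charmatrix.det * (Q.map C).det
      = (P.map C).det * (Q.map C).det * A.charmatrix.det := by ring
    _ = A.charmatrix.det := by rw [hd, one_mul]

/-- Charpoly of a Hermitian matrix is the product of `X - eigenvalue`. -/
lemma my_charpoly_isHermitian {m : Type*} [Fintype m] [DecidableEq m]
    {A : Matrix m m ℂ} (hA : A.IsHermitian) :
    A.charpoly = ∏ i, (X - C ((hA.eigenvalues i : ℂ))) := by
  have hU : (hA.eigenvectorUnitary : Matrix m m ℂ)
      * star (hA.eigenvectorUnitary : Matrix m m ℂ) = 1 :=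
    Matrix.mem_unitaryGroup_iff.mp hA.eigenvectorUnitary.2
  conv_lhs => rw [hA.spectral_theorem, Unitary.conjStarAlgAut_apply]
  rw [my_charpoly_conj _ _ _ hU, my_charpoly_diagonal]
  simp [Function.comp]

end helpers

section kron

variable {M N : ℕ}

lemma kronSum_eq (A : Matrix (Fin M) (Fin M) ℂ) (B : Matrix (Fin N) (Fin N) ℂ) :
    kronSum A B = A ⊗ₖ (1 : Matrix (Fin N) (Fin N) ℂ)
      + (1 : Matrix (Fin M) (Fin M) ℂ) ⊗ₖ B := by
  ext p q
  simp [kronSum, Matrix.kroneckerMap_apply, Matrix.one_apply, mul_comm]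

lemma kronSum_diagonal (d : Fin M → ℂ) (e : Fin N → ℂ) :
    kronSum (Matrix.diagonal d) (Matrix.diagonal e)
      = Matrix.diagonal (fun p : Fin M × Fin N => d p.1 + e p.2) := by
  ext p q
  by_cases h1 : p.1 = q.1 <;> by_cases h2 : p.2 = q.2 <;>
    simp [kronSum, Matrix.diagonal_apply, Prod.ext_iff, h1, h2]

lemma kron_conjTranspose {m n m' n' : Type*} (A : Matrix m n ℂ) (B : Matrix m' n' ℂ) :
    (A ⊗ₖ B)ᴴ = Aᴴ ⊗ₖ Bᴴ := by
  ext p q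
  simp [Matrix.conjTranspose_apply, Matrix.kroneckerMap_apply]

lemma kronSum_isHermitian {A : Matrix (Fin M) (Fin M) ℂ} {B : Matrix (Fin N) (Fin N) ℂ}
    (hA : A.IsHermitian) (hB : B.IsHermitian) : (kronSum A B).IsHermitian := by
  unfold Matrix.IsHermitian
  rw [kronSum_eq, Matrix.conjTranspose_add, kron_conjTranspose, kron_conjTranspose,
    Matrix.conjTranspose_one, Matrix.conjTranspose_one, hA.eq, hB.eq]

lemma kronSum_charpoly {A : Matrix (Fin M) (Fin M) ℂ} {B : Matrix (Fin N) (Fin N) ℂ}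
    (hA : A.IsHermitian) (hB : B.IsHermitian) :
    (kronSum A B).charpoly
      = ∏ p : Fin M × Fin N, (X - C ((hA.eigenvalues p.1 : ℂ) + (hB.eigenvalues p.2 : ℂ))) := by
  set U := (hA.eigenvectorUnitary : Matrix (Fin M) (Fin M) ℂ) with hUdef
  set V := (hB.eigenvectorUnitary : Matrix (Fin N) (Fin N) ℂ) with hVdef
  have hU : U * star U = 1 := Matrix.mem_unitaryGroup_iff.mp hA.eigenvectorUnitary.2
  have hV : V * star V = 1 := Matrix.mem_unitaryGroup_iff.mp hB.eigenvectorUnitary.2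
  set DA : Matrix (Fin M) (Fin M) ℂ := Matrix.diagonal (RCLike.ofReal ∘ hA.eigenvalues)
  set DB : Matrix (Fin N) (Fin N) ℂ := Matrix.diagonal (RCLike.ofReal ∘ hB.eigenvalues)
  have key : kronSum A B = (U ⊗ₖ V) * kronSum DA DB * (star U ⊗ₖ star V) := by
    rw [kronSum_eq DA DB, Matrix.mul_add, Matrix.add_mul,
      ← Matrix.mul_kronecker_mul, ← Matrix.mul_kronecker_mul,
      ← Matrix.mul_kronecker_mul, ← Matrix.mul_kronecker_mul,
      Matrix.mul_one, Matrix.mul_one, hU, hV, kronSum_eq A B,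
      hA.spectral_theorem, hB.spectral_theorem, Unitary.conjStarAlgAut_apply,
      Unitary.conjStarAlgAut_apply]
  have hPQ : (U ⊗ₖ V) * (star U ⊗ₖ star V) = 1 := by
    rw [← Matrix.mul_kronecker_mul, hU, hV, Matrix.one_kronecker_one]
  rw [key, my_charpoly_conj _ _ _ hPQ, kronSum_diagonal, my_charpoly_diagonal]
  simp [Function.comp]

end kron

theorem kronSum_isHermitian_and_eigenvalues
    (M N : ℕ) (hM : 0 < M) (hN : 0 < N)
    (A : Matrix (Fin M) (Fin M) ℂ) (B : Matrix (Fin N) (Fin N) ℂ)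
    (hA : A.IsHermitian) (hB : B.IsHermitian) :
    ∃ hAB : (kronSum A B).IsHermitian,
      Finset.univ.val.map hAB.eigenvalues =
        Finset.univ.val.map
          (fun p : Fin M × Fin N => hA.eigenvalues p.1 + hB.eigenvalues p.2) := by
  have hAB := kronSum_isHermitian hA hB
  refine ⟨hAB, ?_⟩
  have h1 := my_charpoly_isHermitian hAB
  have h2 := kronSum_charpoly hA hB
  have hpoly : (∏ p : Fin M × Fin N, (X - C ((hAB.eigenvalues p : ℂ))))
      = ∏ p : Fin M × Fin N, (X - C ((hA.eigenvalues p.1 : ℂ) + (hB.eigenvalues p.2 : ℂ))) :=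
    h1 ▸ h2
  have hroots : ∀ (f : Fin M × Fin N → ℂ),
      (∏ p : Fin M × Fin N, (X - C (f p))).roots = Finset.univ.val.map f := by
    intro f
    have := Polynomial.roots_multiset_prod_X_sub_C (Finset.univ.val.map f)
    rwa [Multiset.map_map, ← Finset.prod_eq_multiset_prod] at this
  have hC : Finset.univ.val.map (fun p : Fin M × Fin N => ((hAB.eigenvalues p : ℂ)))
      = Finset.univ.val.map
        (fun p : Fin M × Fin N => ((hA.eigenvalues p.1 : ℂ) + (hB.eigenvalues p.2 : ℂ))) := by
    rw [← hroots, ← hroots, hpoly]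
  apply Multiset.map_injective (f := (Complex.ofReal : ℝ → ℂ)) Complex.ofReal_injective
  rw [Multiset.map_map, Multiset.map_map]
  convert hC using 2
  all_goals simp [Function.comp, Function.comp_apply, Complex.ofReal_add]
end
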